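/- arXiv:2401.03258 — 7 statements merged into one kernel-verified Lean document; each statement's English description precedes it below -/
import Mathlib

section
/- Let R be a UFD, 𝔪 a maximal ideal of R, and R̂ the 𝔪-adic completion of R, assumed to also be a UFD and such that the going-down property holds for R → R̂. If g is a greatest common divisor of elements a_1, …, a_n in R, then g is also a greatest common divisor of a_1, …, a_n in R̂. -/
/-- Let `R` be a (Noetherian) UFD, `𝔪` a maximal ideal of `R`, and `R̂` the
`𝔪`-adic completion of `R`, assumed to be a domain which is itself a UFD and
such that the going-down property holds for `R → R̂`.  If `g` is a greatest
common divisor of elements `a_1, …, a_n` of `R`, then (the image of) `g` is also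
a greatest common divisor of (the images of) `a_1, …, a_n` in `R̂`. -/
theorem stmt_6 (R : Type*) [CommRing R] [IsDomain R] [IsNoetherianRing R]
    [UniqueFactorizationMonoid R]
    (𝔪 : Ideal R) (hmax : 𝔪.IsMaximal)
    [IsDomain (AdicCompletion 𝔪 R)]
    [UniqueFactorizationMonoid (AdicCompletion 𝔪 R)]
    -- going-down for `R → R̂`
    (hGD : ∀ (p q : Ideal R), p.IsPrime → q.IsPrime → p ≤ q →
      ∀ Q : Ideal (AdicCompletion 𝔪 R), Q.IsPrime →
        Q.comap (algebraMap R (AdicCompletion 𝔪 R)) = q →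
        ∃ P : Ideal (AdicCompletion 𝔪 R), P.IsPrime ∧ P ≤ Q ∧
          P.comap (algebraMap R (AdicCompletion 𝔪 R)) = p)
    {n : ℕ} (a : Fin n → R) (g : R)
    (hdvd : ∀ i, g ∣ a i) (hmax' : ∀ c : R, (∀ i, c ∣ a i) → c ∣ g) :
    (∀ i, algebraMap R (AdicCompletion 𝔪 R) g ∣ algebraMap R (AdicCompletion 𝔪 R) (a i)) ∧
    ∀ c : AdicCompletion 𝔪 R,
      (∀ i, c ∣ algebraMap R (AdicCompletion 𝔪 R) (a i)) →
      c ∣ algebraMap R (AdicCompletion 𝔪 R) g := by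
  classical
  set A := AdicCompletion 𝔪 R with hA
  set φ := algebraMap R A with hφ
  -- the map `R → R̂` kills only `0`, by the Krull intersection theorem
  have hφ0 : ∀ r : R, φ r = 0 → r = 0 := by
    intro r hr
    have hmem : ∀ k : ℕ, r ∈ 𝔪 ^ k := by
      intro k
      have h1 : AdicCompletion.evalₐ 𝔪 k (φ r) = algebraMap R (R ⧸ 𝔪 ^ k) r :=
        AlgHom.commutes _ r
      rw [hr, map_zero] at h1
      have h2 : Ideal.Quotient.mk (𝔪 ^ k) r = 0 := by
        rw [← Ideal.Quotient.algebraMap_eq, ← h1]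
      exact Ideal.Quotient.eq_zero_iff_mem.mp h2
    have hr' : r ∈ (⨅ k : ℕ, 𝔪 ^ k) := Submodule.mem_iInf _ |>.mpr hmem
    rwa [Ideal.iInf_pow_eq_bot_of_isDomain 𝔪 hmax.ne_top, Ideal.mem_bot] at hr'
  refine ⟨fun i => map_dvd φ (hdvd i), ?_⟩
  by_cases hg : g = 0
  · intro c _
    simp [hg]
  intro c hc
  -- write `a i = g * b i`
  choose b hb using hdvd
  -- common divisors of the `b i` are units
  have hbunit : ∀ d : R, (∀ i, d ∣ b i) → IsUnit d := by
    intro d hd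
    have h1 : g * d ∣ g :=
      hmax' (g * d) (fun i => by rw [hb i]; exact mul_dvd_mul_left g (hd i))
    have h2 : g * d ∣ g * 1 := by simpa using h1
    exact isUnit_of_dvd_one ((mul_dvd_mul_iff_left hg).mp h2)
  -- `n ≠ 0`
  obtain ⟨j⟩ : Nonempty (Fin n) := by
    rcases Nat.eq_zero_or_pos n with h0 | h0
    · subst h0
      exact absurd (zero_dvd_iff.mp (hmax' 0 (fun i => i.elim0))) hg
    · exact ⟨⟨0, h0⟩⟩
  -- some `b i` is nonzero
  have hbne : ∃ i, b i ≠ 0 := by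
    by_contra h
    push_neg at h
    exact not_isUnit_zero (hbunit 0 (fun i => by rw [h i]))
  letI : StrongNormalizationMonoid A := UniqueFactorizationMonoid.normalizationMonoid
  letI : StrongNormalizedGCDMonoid A := UniqueFactorizationMonoid.toStrongNormalizedGCDMonoid A
  -- the gcd of the images of the `b i` is a unit
  have hdu : IsUnit (Finset.univ.gcd fun i => φ (b i)) := by
    by_contra hdun
    obtain ⟨i0, hi0⟩ := hbne
    have hdne : (Finset.univ.gcd fun i => φ (b i)) ≠ 0 := by
      intro h0
      have h1 : (Finset.univ.gcd fun i => φ (b i)) ∣ φ (b i0) :=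
        Finset.gcd_dvd (Finset.mem_univ i0)
      rw [h0] at h1
      exact hi0 (hφ0 _ (zero_dvd_iff.mp h1))
    obtain ⟨P, hPirr, hPdvd⟩ := WfDvdMonoid.exists_irreducible_factor hdun hdne
    have hP : Prime P := UniqueFactorizationMonoid.irreducible_iff_prime.mp hPirr
    have hPb : ∀ i, P ∣ φ (b i) := fun i =>
      hPdvd.trans (Finset.gcd_dvd (Finset.mem_univ i))
    set Q : Ideal A := Ideal.span {P} with hQ
    have hQprime : Q.IsPrime := (Ideal.span_singleton_prime hP.ne_zero).mpr hP
    set p : Ideal R := Q.comap φ with hp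
    have hpprime : p.IsPrime := hQprime.comap φ
    have hpb : ∀ i, b i ∈ p := fun i => by
      show φ (b i) ∈ Q
      exact Ideal.mem_span_singleton.mpr (hPb i)
    have hpne : p ≠ ⊥ := by
      intro h
      exact hi0 (by simpa [h, Ideal.mem_bot] using hpb i0)
    obtain ⟨π, hπp, hπ⟩ := hpprime.exists_mem_prime_of_ne_bot hpne
    have hπspan : Ideal.span {π} ≤ p := (Ideal.span_singleton_le_iff_mem p).mpr hπp
    have hπprime : (Ideal.span {π} : Ideal R).IsPrime :=
      (Ideal.span_singleton_prime hπ.ne_zero).mpr hπ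
    obtain ⟨Q', hQ'p, hQ'le, hQ'comap⟩ := hGD _ _ hπprime hpprime hπspan Q hQprime rfl
    -- `Q'` is nonzero since its contraction `span {π}` is nonzero
    have hQ'ne : Q' ≠ ⊥ := by
      intro h
      have hπmem : π ∈ Ideal.span ({π} : Set R) := Ideal.mem_span_singleton_self π
      rw [← hQ'comap, h] at hπmem
      exact hπ.ne_zero (hφ0 _ (by simpa [Ideal.mem_comap, Ideal.mem_bot] using hπmem))
    -- `span {P}` has height one, so `Q' = Q`
    have hQ'eq : Q' = Q := by
      obtain ⟨q, hqQ', hq⟩ := hQ'p.exists_mem_prime_of_ne_bot hQ'ne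
      have hPq : P ∣ q := Ideal.mem_span_singleton.mp (hQ'le hqQ')
      obtain ⟨u, hu⟩ := (hP.associated_of_dvd hq hPq).symm
      have hPQ' : P ∈ Q' := hu ▸ Ideal.mul_mem_right _ _ hqQ'
      exact le_antisymm hQ'le ((Ideal.span_singleton_le_iff_mem Q').mpr hPQ')
    have hpeq : p = Ideal.span {π} := by rw [← hQ'comap, hQ'eq]
    have : IsUnit π :=
      hbunit π (fun i => Ideal.mem_span_singleton.mp (hpeq ▸ hpb i))
    exact hπ.not_isUnit this
  -- conclude: `c` divides the gcd of the `φ (a i)`, which is associated to `φ g`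
  have hcd : c ∣ Finset.univ.gcd fun i => φ (a i) :=
    Finset.dvd_gcd (fun i _ => hc i)
  have hgcd : (Finset.univ.gcd fun i => φ (a i)) =
      normalize (φ g) * Finset.univ.gcd fun i => φ (b i) := by
    have h1 : (fun i : Fin n => φ (a i)) = fun i => φ g * φ (b i) := by
      funext i; rw [hb i, map_mul]
    rw [h1, Finset.gcd_mul_left]
  have h2 : (normalize (φ g) * Finset.univ.gcd fun i => φ (b i)) ∣ φ g := by
    have h3 : (normalize (φ g) * Finset.univ.gcd fun i => φ (b i)) ∣
        normalize (φ g) * 1 := mul_dvd_mul_left _ (hdu.dvd)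
    rw [mul_one] at h3
    exact h3.trans (normalize_associated (φ g)).dvd
  exact hcd.trans (hgcd ▸ h2)
end

section
/- Let G be a group, N an abelian normal subgroup with G/N free abelian of rank d with basis images t_1, …, t_d of elements x_1, …, x_d ∈ G. Regard N as a ℤ[t_1^{±1},…,t_d^{±1}]-module via conjugation: t_i·y = x_i y x_i^{−1}. Then for all n ≥ 1 and indices i, j, the commutator [x_i^n, x_j^n] equals 𝒯_n(t_i)·𝒯_n(t_j)·[x_i, x_j], where 𝒯_n(t) = 1 + t + ⋯ + t^{n−1}. -/
open scoped commutatorElement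

private lemma aux_comm_right {G : Type*} [Group G] (g h : G) (m : ℕ) :
    ⁅g, h ^ (m + 1)⁆ = ⁅g, h⁆ * (h * ⁅g, h ^ m⁆ * h⁻¹) := by
  simp only [commutatorElement_def, pow_succ']
  group

private lemma aux_comm_left {G : Type*} [Group G] (g h : G) (m : ℕ) :
    ⁅g ^ (m + 1), h⁆ = (g * ⁅g ^ m, h⁆ * g⁻¹) * ⁅g, h⁆ := by
  simp only [commutatorElement_def, pow_succ']
  group

/-- Let `G` be a group and `N` an abelian normal subgroup such that the elements
`x 1, …, x d` of `G` have pairwise commutators in `N`.  Regarding `N` as a module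
over `ℤ[t₁^{±1},…,t_d^{±1}]` with `t_i` acting by conjugation `y ↦ x_i y x_i⁻¹`,
the identity `[x_i^n, x_j^n] = 𝒯_n(t_i)·𝒯_n(t_j)·[x_i, x_j]` with
`𝒯_n(t) = 1 + t + ⋯ + t^{n-1}` reads, purely group-theoretically:
`⁅x_i^n, x_j^n⁆ = ∏_{a<n} ∏_{b<n} (x_i^a x_j^b) ⁅x_i, x_j⁆ (x_i^a x_j^b)⁻¹`
(the factors lie in the abelian subgroup `N`, hence pairwise commute, and the
product is taken as a `noncommProd`). -/
theorem stmt_8 {G : Type*} [Group G] (N : Subgroup G) (hN : N.Normal)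
    (habel : ∀ a ∈ N, ∀ b ∈ N, a * b = b * a)
    {d : ℕ} (x : Fin d → G) (hx : ∀ i j : Fin d, ⁅x i, x j⁆ ∈ N)
    (n : ℕ) (i j : Fin d)
    (hcomm : ((Finset.range n ×ˢ Finset.range n : Finset (ℕ × ℕ)) : Set (ℕ × ℕ)).Pairwise
      fun a b => Commute
        (((x i) ^ a.1 * (x j) ^ a.2) * ⁅x i, x j⁆ * ((x i) ^ a.1 * (x j) ^ a.2)⁻¹)
        (((x i) ^ b.1 * (x j) ^ b.2) * ⁅x i, x j⁆ * ((x i) ^ b.1 * (x j) ^ b.2)⁻¹)) :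
    ⁅(x i) ^ n, (x j) ^ n⁆ =
      (Finset.range n ×ˢ Finset.range n).noncommProd
        (fun a => ((x i) ^ a.1 * (x j) ^ a.2) * ⁅x i, x j⁆ * ((x i) ^ a.1 * (x j) ^ a.2)⁻¹)
        hcomm := by
  haveI := hN
  letI : CommGroup N :=
    { (inferInstance : Group N) with
      mul_comm := fun a b => Subtype.ext (habel a a.2 b b.2) }
  set X := x i with hX
  set Y := x j with hY
  set C : N := ⟨⁅X, Y⁆, hx i j⟩ with hC
  set F : ℕ × ℕ → N := fun p => MulAut.conjNormal (X ^ p.1 * Y ^ p.2) C with hF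
  have conj_succ : ∀ (g : G) (k : ℕ) (z : N),
      MulAut.conjNormal (g ^ (k + 1)) z = MulAut.conjNormal g (MulAut.conjNormal (g ^ k) z) := by
    intro g k z
    rw [pow_succ', map_mul]
    rfl
  have conj_coe : ∀ (g : G) (z : N), ((MulAut.conjNormal g z : N) : G) = g * z * g⁻¹ :=
    fun g z => MulAut.conjNormal_apply g z
  -- inner product
  have key1 : ∀ m : ℕ, ⁅X, Y ^ m⁆ =
      ((∏ b ∈ Finset.range m, MulAut.conjNormal (Y ^ b) C : N) : G) := by
    intro m
    induction m with
    | zero => simp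
    | succ m ih =>
      have h1 : (MulAut.conjNormal Y) (∏ b ∈ Finset.range m, MulAut.conjNormal (Y ^ b) C)
          = ∏ k ∈ Finset.range m, MulAut.conjNormal (Y ^ (k + 1)) C := by
        rw [map_prod]
        exact Finset.prod_congr rfl fun b _ => (conj_succ Y b C).symm
      rw [aux_comm_right, ih, ← conj_coe Y, h1, Finset.prod_range_succ']
      rw [Subgroup.coe_mul]
      have : ((MulAut.conjNormal (Y ^ 0) C : N) : G) = ⁅X, Y⁆ := by
        simp [hC]
      rw [this]
      exact habel _ (hx i j) _ (SetLike.coe_mem _)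
  set D : N := ∏ b ∈ Finset.range n, MulAut.conjNormal (Y ^ b) C with hD
  have key2 : ∀ m : ℕ, ⁅X ^ m, Y ^ n⁆ =
      ((∏ a ∈ Finset.range m, MulAut.conjNormal (X ^ a) D : N) : G) := by
    intro m
    induction m with
    | zero => simp
    | succ m ih =>
      have h1 : (MulAut.conjNormal X) (∏ a ∈ Finset.range m, MulAut.conjNormal (X ^ a) D)
          = ∏ k ∈ Finset.range m, MulAut.conjNormal (X ^ (k + 1)) D := by
        rw [map_prod]
        exact Finset.prod_congr rfl fun a _ => (conj_succ X a D).symm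
      rw [aux_comm_left, ih, ← conj_coe X, h1, Finset.prod_range_succ']
      rw [Subgroup.coe_mul]
      congr 1
      rw [key1 n]
      simp [hD]
  -- rewrite the RHS as the coercion of a product in the commutative group N
  have hfac : ∀ p : ℕ × ℕ, N.subtype (F p) =
      ((x i) ^ p.1 * (x j) ^ p.2) * ⁅x i, x j⁆ * ((x i) ^ p.1 * (x j) ^ p.2)⁻¹ := by
    intro p
    rw [hF]
    exact conj_coe _ _
  have commF : ((Finset.range n ×ˢ Finset.range n : Finset (ℕ × ℕ)) : Set (ℕ × ℕ)).Pairwise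
      fun a b => Commute (F a) (F b) := fun a _ b _ _ => Commute.all _ _
  have hmap := Finset.map_noncommProd (Finset.range n ×ˢ Finset.range n) F commF N.subtype
  have e1 : (Finset.range n ×ˢ Finset.range n).noncommProd
      (fun a => ((x i) ^ a.1 * (x j) ^ a.2) * ⁅x i, x j⁆ * ((x i) ^ a.1 * (x j) ^ a.2)⁻¹) hcomm
      = ((∏ p ∈ Finset.range n ×ˢ Finset.range n, F p : N) : G) := by
    refine (Finset.noncommProd_congr rfl (fun p _ => (hfac p).symm) hcomm).trans
      (hmap.symm.trans ?_)
    show N.subtype _ = _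
    rw [Finset.noncommProd_eq_prod]
    rfl
  rw [e1, key2 n]
  congr 1
  rw [Finset.prod_product]
  refine Finset.prod_congr rfl fun a _ => ?_
  rw [map_prod]
  refine Finset.prod_congr rfl fun b _ => ?_
  rw [hF]
  show MulAut.conjNormal (X ^ a) (MulAut.conjNormal (Y ^ b) C) = _
  show _ = MulAut.conjNormal (X ^ a * Y ^ b) C
  rw [map_mul]
  rfl
end

section
/- Let G be a group, N an abelian normal subgroup with G/N free abelian with basis images of x_1, …, x_d, and regard N as a module over ℤ[t_1^{±1},…,t_d^{±1}] via conjugation. Set c_{ij} = [x_i, x_j] ∈ N. Then for all distinct i, j, k: (t_i − 1)c_{jk} + (t_j − 1)c_{ki} + (t_k − 1)c_{ij} = 0 in N. -/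
open scoped commutatorElement

/-- In a commutative group the relevant product telescopes to `1`. -/
lemma stmt_9_aux {M : Type*} [CommGroup M] (u1 u2 u3 u4 u5 : M) :
    u1 * u2⁻¹ * u3 * u4⁻¹ * u5 * u3⁻¹ * u2 * u5⁻¹ * u4 * u1⁻¹ = 1 := by
  show Additive.toMul (Additive.ofMul u1 + -Additive.ofMul u2 + Additive.ofMul u3
        + -Additive.ofMul u4 + Additive.ofMul u5 + -Additive.ofMul u3 + Additive.ofMul u2
        + -Additive.ofMul u5 + Additive.ofMul u4 + -Additive.ofMul u1) = Additive.toMul (0 : Additive M)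
  congr 1
  abel

/-- Let `G` be a group and `N` an abelian normal subgroup such that the commutators
`c_{ij} = [x_i, x_j]` of the elements `x 1, …, x d` of `G` all lie in `N`.
Regarding `N` as a module over `ℤ[t₁^{±1},…,t_d^{±1}]` with `t_i` acting by
conjugation by `x_i`, the relation
`(t_i − 1)c_{jk} + (t_j − 1)c_{ki} + (t_k − 1)c_{ij} = 0` reads, purely
group-theoretically (noting `(t − 1)·c = ⁅x, c⁆` multiplicatively):
`⁅x_i, ⁅x_j, x_k⁆⁆ · ⁅x_j, ⁅x_k, x_i⁆⁆ · ⁅x_k, ⁅x_i, x_j⁆⁆ = 1` for distinct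
`i, j, k`. -/
theorem stmt_9 {G : Type*} [Group G] (N : Subgroup G) (hN : N.Normal)
    (habel : ∀ a ∈ N, ∀ b ∈ N, a * b = b * a)
    {d : ℕ} (x : Fin d → G) (hx : ∀ i j : Fin d, ⁅x i, x j⁆ ∈ N)
    (i j k : Fin d) (hij : i ≠ j) (hjk : j ≠ k) (hik : i ≠ k) :
    ⁅x i, ⁅x j, x k⁆⁆ * ⁅x j, ⁅x k, x i⁆⁆ * ⁅x k, ⁅x i, x j⁆⁆ = 1 := by
  set a := x i with ha
  set b := x j with hb
  set c := x k with hc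
  have hA : ⁅b, c⁆ ∈ N := hx j k
  have hB : ⁅c, a⁆ ∈ N := hx k i
  have hC : ⁅a, b⁆ ∈ N := hx i j
  have hp : b * ⁅c, a⁆ * b⁻¹ ∈ N := hN.conj_mem _ hB b
  have hq : c * ⁅a, b⁆ * c⁻¹ ∈ N := hN.conj_mem _ hC c
  letI : CommGroup N :=
    { (inferInstance : Group N) with
      mul_comm := fun u v => Subtype.ext (habel u u.2 v v.2) }
  -- A free-group identity (an avatar of the Hall–Witt identity): rewrite the product of
  -- the three commutators in terms of elements of `N` and their conjugates.
  have key : ⁅a, ⁅b,c⁆⁆ * ⁅b, ⁅c,a⁆⁆ * ⁅c, ⁅a,b⁆⁆ =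
      ⁅a,b⁆ * (b * ⁅c,a⁆ * b⁻¹)⁻¹ * ⁅b,c⁆ * (c * ⁅a,b⁆ * c⁻¹)⁻¹ * ⁅c,a⁆
      * ⁅b,c⁆⁻¹ * (b * ⁅c,a⁆ * b⁻¹) * ⁅c,a⁆⁻¹ * (c * ⁅a,b⁆ * c⁻¹) * ⁅a,b⁆⁻¹ := by
    simp only [commutatorElement_def]; group
  rw [key]
  -- The right-hand side is a product of elements of `N`, which vanishes since `N` is abelian.
  have h1 : ((⟨⁅a,b⁆, hC⟩ : N) * (⟨b * ⁅c,a⁆ * b⁻¹, hp⟩ : N)⁻¹ * (⟨⁅b,c⁆, hA⟩ : N)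
      * (⟨c * ⁅a,b⁆ * c⁻¹, hq⟩ : N)⁻¹ * (⟨⁅c,a⁆, hB⟩ : N) * (⟨⁅b,c⁆, hA⟩ : N)⁻¹
      * (⟨b * ⁅c,a⁆ * b⁻¹, hp⟩ : N) * (⟨⁅c,a⁆, hB⟩ : N)⁻¹
      * (⟨c * ⁅a,b⁆ * c⁻¹, hq⟩ : N) * (⟨⁅a,b⁆, hC⟩ : N)⁻¹) = 1 :=
    stmt_9_aux _ _ _ _ _
  have h2 := congrArg (Subgroup.subtype N) h1
  simpa using h2
end

section
/- Let G be a group with a surjective homomorphism 𝒫: G → ℤ^d with abelian kernel N, let 𝒵 ≤ ℤ^d be a subgroup isomorphic to ℤ^{d'} with basis t'_1, …, t'_{d'}, and let H = 𝒫^{−1}(𝒵). Let x'_1, …, x'_{d'} be lifts of the t'_i, let I ⊆ ℤ[t_1^{±1},…,t_d^{±1}] be the ideal generated by t'_1 − 1, …, t'_{d'} − 1, and let C be the submodule of N generated by the commutators [x'_i, x'_j] (i < j). Then the commutator subgroup [H, H] equals C + I·N, and there is a short exact sequence 0 → N/(C + IN) → H^{ab} → ℤ^{d'} → 0 of abelian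 groups. -/
open scoped commutatorElement

/-- Let `G` be a group with a surjective homomorphism `P : G → ℤ^d` with abelian
kernel `N`, let `Z ≤ ℤ^d` be a subgroup free of rank `d'` with basis
`t'_1, …, t'_{d'}`, and let `H = P⁻¹(Z)`, with lifts `x'_i` of the `t'_i`.
Let `C + I·N` be the subgroup of `G` generated by the `Λ_ℤ`-module `C` generated
by the commutators `[x'_i, x'_j]` (`i < j`) — i.e. by all their conjugates,
since the `Λ_ℤ = ℤ[t_1^{±1},…,t_d^{±1}]`-action on the abelian normal subgroup
`N` is by conjugation — together with `I·N`, generated by the elements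
`(t'_i − 1)·y = [x'_i, y]` for `y ∈ N`.  Then `[H, H] = C + I·N`, and there is a
short exact sequence `0 → N/(C + IN) → H^{ab} → ℤ^{d'} → 0`: the natural map
`ι : N/(C+IN) → H/(C+IN) = H^{ab}` is injective and its image is the kernel of
the map `q : H^{ab} → ℤ^d` induced by `P`, whose image is `Z ≅ ℤ^{d'}`. -/
theorem stmt_10 {G : Type*} [Group G] {d d' : ℕ}
    (P : G →* Multiplicative (Fin d → ℤ)) (hsurj : Function.Surjective P)
    (habel : ∀ a ∈ P.ker, ∀ b ∈ P.ker, a * b = b * a)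
    (Z : Subgroup (Multiplicative (Fin d → ℤ)))
    (t' : Fin d' → Multiplicative (Fin d → ℤ))
    (ht' : Subgroup.closure (Set.range t') = Z)
    (hind : ∀ c : Fin d' → ℤ, (∏ i, t' i ^ c i) = 1 → c = 0)
    (x' : Fin d' → G) (hx' : ∀ i, P (x' i) = t' i)
    (H : Subgroup G) (hH : H = Z.comap P)
    (hNH : P.ker ≤ H)
    (CIN : Subgroup G)
    (hCIN : CIN = Subgroup.closure
      ({g | ∃ i j : Fin d', ∃ w : G, i < j ∧ g = w * ⁅x' i, x' j⁆ * w⁻¹} ∪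
       {g | ∃ (i : Fin d') (y : G), y ∈ P.ker ∧ g = ⁅x' i, y⁆}))
    [hn1 : (CIN.subgroupOf P.ker).Normal]
    [hn2 : (CIN.subgroupOf H).Normal] :
    ⁅H, H⁆ = CIN ∧
    ∃ (ι : ↥(P.ker) ⧸ CIN.subgroupOf P.ker →* ↥H ⧸ CIN.subgroupOf H)
      (q : ↥H ⧸ CIN.subgroupOf H →* Multiplicative (Fin d → ℤ)),
      (∀ y : ↥(P.ker),
        ι (QuotientGroup.mk y) = QuotientGroup.mk (Subgroup.inclusion hNH y)) ∧
      (∀ h : ↥H, q (QuotientGroup.mk h) = P h) ∧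
      Function.Injective ι ∧
      ι.range = q.ker ∧
      q.range = Z := by
  -- basic memberships
  have ht'Z : ∀ i, t' i ∈ Z := by
    intro i; rw [← ht']; exact Subgroup.subset_closure ⟨i, rfl⟩
  have hx'H : ∀ i, x' i ∈ H := by
    intro i; rw [hH]; simpa [Subgroup.mem_comap, hx'] using ht'Z i
  -- CIN ≤ ker P
  have hCK : CIN ≤ P.ker := by
    rw [hCIN]
    refine (Subgroup.closure_le _).2 ?_
    rintro g (⟨i, j, w, hij, rfl⟩ | ⟨i, y, hy, rfl⟩)
    · show _ ∈ P.ker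
      have h1 : P ⁅x' i, x' j⁆ = 1 := by
        rw [map_commutatorElement]
        exact commutatorElement_eq_one_iff_commute.2 (mul_comm _ _)
      rw [MonoidHom.mem_ker]
      simp [h1]
    · simp only [MonoidHom.mem_ker] at hy
      show _ ∈ P.ker
      rw [MonoidHom.mem_ker, map_commutatorElement]
      exact commutatorElement_eq_one_iff_commute.2 (by rw [hy]; exact Commute.one_right _)
  have hCH : CIN ≤ H := hCK.trans hNH
  -- decomposition of elements of Z
  have hZdec : ∀ z ∈ Z, ∃ c : Fin d' → ℤ, z = ∏ i, t' i ^ c i := by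
    intro z hz
    rw [← ht'] at hz
    induction hz using Subgroup.closure_induction with
    | mem g hg =>
        obtain ⟨i, rfl⟩ := hg
        exact ⟨Pi.single i 1, by simp [Pi.single_apply, Finset.prod_eq_single i]⟩
    | one => exact ⟨0, by simp⟩
    | mul a b _ _ iha ihb =>
        obtain ⟨c, rfl⟩ := iha; obtain ⟨c', rfl⟩ := ihb
        exact ⟨c + c', by simp [zpow_add, Finset.prod_mul_distrib]⟩
    | inv a _ ih =>
        obtain ⟨c, rfl⟩ := ih
        exact ⟨-c, by simp⟩
  -- decomposition of elements of H
  have hPL : ∀ c : Fin d' → ℤ,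
      P ((List.finRange d').map fun i => x' i ^ c i).prod = ∏ i, t' i ^ c i := by
    intro c
    rw [map_list_prod, List.map_map, Fin.prod_univ_def]
    congr 1
    ext i
    simp [hx']
  have hHdec : ∀ a : H, ∃ (c : Fin d' → ℤ) (n : G), n ∈ P.ker ∧
      (a : G) = ((List.finRange d').map fun i => x' i ^ c i).prod * n := by
    intro a
    have haZ : P (a : G) ∈ Z := by
      have h2 : (a : G) ∈ Z.comap P := by rw [← hH]; exact a.2
      exact Subgroup.mem_comap.mp h2
    obtain ⟨c, hc⟩ := hZdec _ haZ
    refine ⟨c, (((List.finRange d').map fun i => x' i ^ c i).prod)⁻¹ * a, ?_, by group⟩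
    simp only [MonoidHom.mem_ker, map_mul, map_inv, hPL, ← hc]
    group

  -- elements x' in H as subtype
  set X : Fin d' → H := fun i => ⟨x' i, hx'H i⟩ with hX
  set pi := QuotientGroup.mk' (CIN.subgroupOf H) with hpi
  have hmem : ∀ h : H, pi h = 1 ↔ (h : G) ∈ CIN := by
    intro h
    rw [hpi, QuotientGroup.mk'_apply, QuotientGroup.eq_one_iff, Subgroup.mem_subgroupOf]
  -- commuting of generators in the quotient
  have hC1 : ∀ i j : Fin d', Commute (pi (X i)) (pi (X j)) := by
    have key : ∀ i j : Fin d', i < j → Commute (pi (X i)) (pi (X j)) := by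
      intro i j hij
      rw [← commutatorElement_eq_one_iff_commute, ← map_commutatorElement, hmem]
      show ⁅x' i, x' j⁆ ∈ CIN
      rw [hCIN]
      exact Subgroup.subset_closure (Or.inl ⟨i, j, 1, hij, by group⟩)
    intro i j
    rcases lt_trichotomy i j with h | h | h
    · exact key i j h
    · rw [h]
    · exact (key j i h).symm
  have hC2 : ∀ (i : Fin d') (y : G) (hy : y ∈ P.ker),
      Commute (pi (X i)) (pi ⟨y, hNH hy⟩) := by
    intro i y hy
    rw [← commutatorElement_eq_one_iff_commute, ← map_commutatorElement, hmem]
    show ⁅x' i, y⁆ ∈ CIN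
    rw [hCIN]
    exact Subgroup.subset_closure (Or.inr ⟨i, y, hy, rfl⟩)
  have hC3 : ∀ (y z : G) (hy : y ∈ P.ker) (hz : z ∈ P.ker),
      Commute (pi ⟨y, hNH hy⟩) (pi ⟨z, hNH hz⟩) := by
    intro y z hy hz
    have : Commute (⟨y, hNH hy⟩ : H) (⟨z, hNH hz⟩ : H) :=
      Subtype.ext (habel y hy z hz)
    exact this.map pi
  -- products of generators
  have hL : ∀ (c : Fin d' → ℤ) (u : H ⧸ CIN.subgroupOf H),
      (∀ i, Commute (pi (X i)) u) →
      Commute (((List.finRange d').map fun i => (pi (X i)) ^ c i).prod) u := by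
    intro c u hu
    refine Commute.list_prod_left _ _ ?_
    intro x hx
    obtain ⟨i, _, rfl⟩ := List.mem_map.mp hx
    exact (hu i).zpow_left (c i)
  have hpil : ∀ c : Fin d' → ℤ,
      pi (((List.finRange d').map fun i => (X i) ^ c i).prod)
        = ((List.finRange d').map fun i => (pi (X i)) ^ c i).prod := by
    intro c
    rw [map_list_prod, List.map_map]
    congr 1
  have hcoeL : ∀ c : Fin d' → ℤ,
      ((((List.finRange d').map fun i => (X i) ^ c i).prod : H) : G)
        = ((List.finRange d').map fun i => x' i ^ c i).prod := by
    intro c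
    rw [SubmonoidClass.coe_list_prod, List.map_map]
    congr 1
  -- main commuting statement
  have hmain : ∀ a b : H, Commute (pi a) (pi b) := by
    intro a b
    obtain ⟨c, n, hn, ha⟩ := hHdec a
    obtain ⟨c', n', hn', hb⟩ := hHdec b
    have ha' : a = (((List.finRange d').map fun i => (X i) ^ c i).prod) * ⟨n, hNH hn⟩ := by
      apply Subtype.ext
      rw [ha]
      show _ = (((((List.finRange d').map fun i => (X i) ^ c i).prod : H) : G)) * n
      rw [hcoeL]
    have hb' : b = (((List.finRange d').map fun i => (X i) ^ c' i).prod) * ⟨n', hNH hn'⟩ := by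
      apply Subtype.ext
      rw [hb]
      show _ = (((((List.finRange d').map fun i => (X i) ^ c' i).prod : H) : G)) * n'
      rw [hcoeL]
    rw [ha', hb', map_mul, map_mul, hpil, hpil]
    apply Commute.mul_left
    · apply Commute.mul_right
      · exact hL c _ fun i => (hL c' (pi (X i)) fun j => hC1 j i).symm
      · exact hL c _ fun i => hC2 i n' hn'
    · apply Commute.mul_right
      · exact (hL c' _ fun i => hC2 i n hn).symm
      · exact hC3 n n' hn hn'
  -- [H,H] = CIN
  haveI hZn : Z.Normal := inferInstance
  haveI hHn : H.Normal := by rw [hH]; exact Subgroup.Normal.comap hZn P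
  have hcomm1 : ⁅H, H⁆ = CIN := by
    apply le_antisymm
    · rw [Subgroup.commutator_le]
      intro g1 h1 g2 h2
      have := hmain ⟨g1, h1⟩ ⟨g2, h2⟩
      rw [← commutatorElement_eq_one_iff_commute, ← map_commutatorElement, hmem] at this
      exact this
    · rw [hCIN]
      refine (Subgroup.closure_le _).2 ?_
      rintro g (⟨i, j, w, hij, rfl⟩ | ⟨i, y, hy, rfl⟩)
      · exact Subgroup.Normal.conj_mem inferInstance _
          (Subgroup.commutator_mem_commutator (hx'H i) (hx'H j)) w
      · exact Subgroup.commutator_mem_commutator (hx'H i) (hNH hy)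
  refine ⟨hcomm1, ?_⟩
  -- the maps
  have hf1 : ∀ y ∈ CIN.subgroupOf P.ker,
      (pi.comp (Subgroup.inclusion hNH)) y = 1 := by
    intro y hy
    rw [MonoidHom.comp_apply, hmem]
    exact (Subgroup.mem_subgroupOf).mp hy
  refine ⟨QuotientGroup.lift (CIN.subgroupOf P.ker) (pi.comp (Subgroup.inclusion hNH)) hf1,
    QuotientGroup.lift (CIN.subgroupOf H) (P.comp H.subtype)
      (fun h hh => MonoidHom.mem_ker.mp (hCK ((Subgroup.mem_subgroupOf).mp hh))),
    fun y => rfl, fun h => rfl, ?_, ?_, ?_⟩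
  · rw [injective_iff_map_eq_one]
    intro z
    refine QuotientGroup.induction_on z ?_
    intro y hy
    have : (y : G) ∈ CIN := by
      change (pi.comp (Subgroup.inclusion hNH)) y = 1 at hy
      exact (hmem _).mp hy
    rw [QuotientGroup.eq_one_iff]
    exact (Subgroup.mem_subgroupOf).mpr this
  · ext z
    simp only [MonoidHom.mem_range, MonoidHom.mem_ker]
    constructor
    · rintro ⟨w, rfl⟩
      refine QuotientGroup.induction_on w ?_
      intro y
      exact MonoidHom.mem_ker.mp y.2
    · intro hz
      refine QuotientGroup.induction_on z (fun h hz => ?_) hz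
      have hk : (h : G) ∈ P.ker := hz
      refine ⟨QuotientGroup.mk (⟨(h : G), hk⟩ : P.ker), ?_⟩
      show QuotientGroup.mk (Subgroup.inclusion hNH ⟨(h : G), hk⟩) = _
      rfl
  · ext z
    simp only [MonoidHom.mem_range]
    constructor
    · rintro ⟨w, rfl⟩
      refine QuotientGroup.induction_on w ?_
      intro h
      have h2 : (h : G) ∈ Z.comap P := by rw [← hH]; exact h.2
      exact h2
    · intro hz
      obtain ⟨g, hg⟩ := hsurj z
      have hgH : g ∈ H := by rw [hH]; exact Subgroup.mem_comap.mpr (hg ▸ hz)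
      exact ⟨QuotientGroup.mk (⟨g, hgH⟩ : H), hg⟩
end

section
/- Let Λ = ℤ_p[[T_1,…,T_d]] with d ≥ 1, n ≥ 1, and for each i let f_i be either ω_{p^n}(T_i) = (1+T_i)^{p^n} − 1 or ν_{p^n}(T_i) = ω_{p^n}(T_i)/T_i. Then the natural map Λ/(ω_{p^n}(T_1), f_2, …, f_d) → Λ/(T_1, f_2, …, f_d) ⊕ Λ/(ν_{p^n}(T_1), f_2, …, f_d) is injective. -/
/-- The polynomial `ν_N(T) = ((1+T)^N − 1)/T = ∑_{k=0}^{N-1} C(N, k+1) T^k`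
(over `ℤ`). -/
noncomputable def nuPoly (N : ℕ) : Polynomial ℤ :=
  ∑ k ∈ Finset.range N, Polynomial.C (N.choose (k + 1) : ℤ) * Polynomial.X ^ k

/-- `ω_{p^n}(T_i) = (1 + T_i)^{p^n} − 1` in `Λ = ℤ_p[[T_1, …, T_d]]`. -/
noncomputable def omegaElt (p : ℕ) [Fact p.Prime] (d n : ℕ) (i : Fin d) :
    MvPowerSeries (Fin d) ℤ_[p] :=
  (1 + MvPowerSeries.X i) ^ (p ^ n) - 1

/-- `ν_{p^n}(T_i) = ((1 + T_i)^{p^n} − 1)/T_i` in `Λ = ℤ_p[[T_1, …, T_d]]`. -/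
noncomputable def nuElt (p : ℕ) [Fact p.Prime] (d n : ℕ) (i : Fin d) :
    MvPowerSeries (Fin d) ℤ_[p] :=
  Polynomial.aeval (MvPowerSeries.X i) (nuPoly (p ^ n))

open MvPowerSeries Finsupp

section GeneralHelpers

variable {ι : Type*} {A : Type*} [CommRing A]

lemma IwAux.mem_span_image_finset {S : Finset ι} {v : ι → A} {x : A} :
    x ∈ Ideal.span (v '' ↑S) ↔ ∃ c : ι → A, x = ∑ i ∈ S, c i * v i := by
  classical
  constructor
  · intro hx
    refine Submodule.span_induction ?_ ?_ ?_ ?_ hx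
    · rintro _ ⟨i, hi, rfl⟩
      refine ⟨fun j => if j = i then 1 else 0, ?_⟩
      rw [Finset.sum_eq_single i]
      · simp
      · intro b _ hb; simp [hb]
      · intro h; exact absurd (by simpa using hi) h
    · exact ⟨0, by simp⟩
    · rintro x y _ _ ⟨c, rfl⟩ ⟨c', rfl⟩
      exact ⟨c + c', by simp [add_mul, Finset.sum_add_distrib]⟩
    · rintro a x _ ⟨c, rfl⟩
      exact ⟨a • c, by simp [Finset.mul_sum, mul_assoc]⟩
  · rintro ⟨c, rfl⟩
    exact Ideal.sum_mem _ fun i hi =>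
      Ideal.mul_mem_left _ _ (Ideal.subset_span ⟨i, by simpa using hi, rfl⟩)

variable {σ : Type*} [DecidableEq σ]

lemma IwAux.coeff_X_pow_mul' (R : Type*) [CommRing R] (s : σ) (M : ℕ) (F : MvPowerSeries σ R)
    (e : σ →₀ ℕ) :
    coeff (R := R) e (X s ^ M * F) = if M ≤ e s then coeff (R := R) (e - single s M) F else 0 := by
  rw [X_pow_eq, coeff_monomial_mul]
  simp [Finsupp.single_le_iff]

lemma IwAux.X_pow_mul_cancel {R : Type*} [CommRing R] {s : σ} {M : ℕ} {F : MvPowerSeries σ R}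
    (h : X s ^ M * F = 0) : F = 0 := by
  ext e
  have := congrArg (coeff (R := R) (e + single s M)) h
  rw [IwAux.coeff_X_pow_mul'] at this
  simpa using this

/-- Decompose a power series as (low X_s-degree part) + X_s^M * (rest). -/
lemma IwAux.exists_decomp (R : Type*) [CommRing R] (s : σ) (M : ℕ) (F : MvPowerSeries σ R) :
    ∃ a b : MvPowerSeries σ R, F = a + X s ^ M * b ∧
      ∀ e : σ →₀ ℕ, M ≤ e s → coeff (R := R) e a = 0 := by
  obtain ⟨a, ha⟩ : ∃ a : MvPowerSeries σ R,
      ∀ e, coeff (R := R) e a = if e s < M then coeff (R := R) e F else 0 :=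
    ⟨fun e => if e s < M then coeff (R := R) e F else 0, fun _ => rfl⟩
  obtain ⟨b, hb⟩ : ∃ b : MvPowerSeries σ R,
      ∀ e, coeff (R := R) e b = coeff (R := R) (e + single s M) F :=
    ⟨fun e => coeff (R := R) (e + single s M) F, fun _ => rfl⟩
  refine ⟨a, b, ?_, ?_⟩
  · ext e
    rw [map_add, IwAux.coeff_X_pow_mul', ha]
    by_cases h : M ≤ e s
    · have h1 : ¬ e s < M := not_lt.mpr h
      have h2 : (e - single s M) + single s M = e :=
        tsub_add_cancel_of_le (Finsupp.single_le_iff.mpr h)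
      simp only [hb, h1, if_false, if_pos h, zero_add]
      rw [h2]
    · have h1 : e s < M := lt_of_not_ge h
      simp [h1, h]
  · intro e h
    simp [ha, not_lt.mpr h]

/-- If `X j ^ M * h` lies in a monomial ideal on pure powers of variables other
than `j`, then so does `h`. -/
lemma IwAux.mem_monomial_span_of_X_pow_mul {R : Type*} [CommRing R] (S : Finset σ) (m : σ → ℕ)
    (j : σ) (hj : j ∉ S) (M : ℕ) (h : MvPowerSeries σ R)
    (H : X j ^ M * h ∈ Ideal.span ((fun i => (X i : MvPowerSeries σ R) ^ m i) '' ↑S)) :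
    h ∈ Ideal.span ((fun i => (X i : MvPowerSeries σ R) ^ m i) '' ↑S) := by
  obtain ⟨c, hc⟩ := IwAux.mem_span_image_finset.mp H
  choose a b hab ha using fun i => IwAux.exists_decomp R j M (c i)
  have split : ∑ i ∈ S, c i * X i ^ m i
      = (∑ i ∈ S, a i * X i ^ m i) + X j ^ M * ∑ i ∈ S, b i * X i ^ m i := by
    rw [Finset.mul_sum, ← Finset.sum_add_distrib]
    refine Finset.sum_congr rfl fun i _ => ?_
    rw [hab i]; ring
  have key : X j ^ M * (h - ∑ i ∈ S, b i * X i ^ m i) = ∑ i ∈ S, a i * X i ^ m i := by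
    rw [mul_sub, hc, split]; ring
  have key0 : (∑ i ∈ S, a i * X i ^ m i : MvPowerSeries σ R) = 0 := by
    ext e
    rw [map_sum, map_zero]
    by_cases hM : M ≤ e j
    · refine Finset.sum_eq_zero fun i hi => ?_
      have hij : i ≠ j := fun hh => hj (hh ▸ hi)
      rw [mul_comm, IwAux.coeff_X_pow_mul']
      by_cases hmi : m i ≤ e i
      · rw [if_pos hmi]
        refine ha i _ ?_
        rw [Finsupp.tsub_apply, Finsupp.single_apply, if_neg hij]
        simpa using hM
      · rw [if_neg hmi]
    · have := congrArg (coeff (R := R) e) key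
      rw [IwAux.coeff_X_pow_mul', if_neg hM] at this
      rw [map_sum] at this
      exact this.symm
  have h0 : h - ∑ i ∈ S, b i * X i ^ m i = 0 := IwAux.X_pow_mul_cancel (by rw [key, key0])
  have hh : h = ∑ i ∈ S, b i * X i ^ m i := by linear_combination h0
  exact IwAux.mem_span_image_finset.mpr ⟨b, hh⟩

end GeneralHelpers

section PolyIdentities

lemma IwAux.omegaPoly_eq (N : ℕ) :
    (1 + Polynomial.X : Polynomial ℤ) ^ N - 1 = Polynomial.X * nuPoly N := by
  rw [add_comm (1 : Polynomial ℤ), add_pow, Finset.sum_range_succ']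
  simp only [one_pow, mul_one, pow_zero, Nat.choose_zero_right, Nat.cast_one, one_mul]
  rw [nuPoly, Finset.mul_sum]
  rw [add_sub_cancel_right]
  refine Finset.sum_congr rfl fun k _ => ?_
  rw [← Polynomial.C_eq_natCast]
  ring

lemma IwAux.nuPoly_coeff_zero (N : ℕ) : (nuPoly N).coeff 0 = N := by
  rw [nuPoly, Polynomial.finset_sum_coeff]
  rw [Finset.sum_eq_single 0]
  · cases N with
    | zero => simp
    | succ n => simp
  · intro k _ hk
    simp [Polynomial.coeff_C_mul, Polynomial.coeff_X_pow, Ne.symm hk]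
  · intro h
    simp at h
    simp [h]

lemma IwAux.nuPoly_eq (N : ℕ) :
    nuPoly N = Polynomial.C (N : ℤ) + Polynomial.X * (nuPoly N).divX := by
  rw [← IwAux.nuPoly_coeff_zero N]
  rw [add_comm]
  exact (Polynomial.X_mul_divX_add (nuPoly N)).symm

end PolyIdentities

section PadicHelpers

variable (p : ℕ) [Fact p.Prime] (d n : ℕ)

/-- Reduction mod `p` on `ℤ_p[[T_1,…,T_d]]`. -/
noncomputable def IwAux.piMap : MvPowerSeries (Fin d) ℤ_[p] →+* MvPowerSeries (Fin d) (ZMod p) :=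
  MvPowerSeries.map (PadicInt.toZMod)

lemma IwAux.omegaElt_eq_aeval (i : Fin d) :
    omegaElt p d n i =
      Polynomial.aeval (MvPowerSeries.X i : MvPowerSeries (Fin d) ℤ_[p])
        ((1 + Polynomial.X : Polynomial ℤ) ^ (p ^ n) - 1) := by
  simp [omegaElt]

lemma IwAux.omega_eq_X_mul_nu (i : Fin d) :
    omegaElt p d n i = MvPowerSeries.X i * nuElt p d n i := by
  rw [IwAux.omegaElt_eq_aeval, IwAux.omegaPoly_eq, map_mul, Polynomial.aeval_X, nuElt]

lemma IwAux.nu_eq (i : Fin d) :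
    nuElt p d n i = (MvPowerSeries.C (σ := Fin d) (R := ℤ_[p]) ((p : ℤ_[p]) ^ n)) +
      MvPowerSeries.X i *
        Polynomial.aeval (MvPowerSeries.X i : MvPowerSeries (Fin d) ℤ_[p])
          ((nuPoly (p ^ n)).divX) := by
  conv_lhs => rw [nuElt, IwAux.nuPoly_eq]
  rw [map_add, map_mul, Polynomial.aeval_X, Polynomial.aeval_C]
  congr 1
  push_cast
  simp [Algebra.algebraMap_eq_smul_one]

instance : CharP (MvPowerSeries (Fin d) (ZMod p)) p :=
  charP_of_injective_ringHom (f := (MvPowerSeries.C (σ := Fin d) (R := ZMod p) : ZMod p →+* _))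
    (fun a b hab => by
      have := congrArg (MvPowerSeries.constantCoeff (σ := Fin d) (R := ZMod p)) hab
      simpa using this) p

lemma IwAux.pi_omega (i : Fin d) :
    IwAux.piMap p d (omegaElt p d n i) = MvPowerSeries.X i ^ (p ^ n) := by
  rw [omegaElt, IwAux.piMap]
  rw [map_sub, map_pow, map_add, map_one, MvPowerSeries.map_X]
  rw [add_comm (1 : MvPowerSeries (Fin d) (ZMod p))]
  rw [add_pow_char_pow]
  simp

lemma IwAux.pi_nu (i : Fin d) :
    IwAux.piMap p d (nuElt p d n i) = MvPowerSeries.X i ^ (p ^ n - 1) := by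
  have hp : p.Prime := Fact.out
  have h1 : 1 ≤ p ^ n := Nat.one_le_pow _ _ hp.pos
  have key : MvPowerSeries.X i * IwAux.piMap p d (nuElt p d n i)
      = MvPowerSeries.X i * MvPowerSeries.X i ^ (p ^ n - 1) := by
    have hX : IwAux.piMap p d (MvPowerSeries.X i) = MvPowerSeries.X i :=
      MvPowerSeries.map_X _ _
    calc MvPowerSeries.X i * IwAux.piMap p d (nuElt p d n i)
        = IwAux.piMap p d (MvPowerSeries.X i * nuElt p d n i) := by rw [map_mul, hX]
      _ = IwAux.piMap p d (omegaElt p d n i) := by rw [IwAux.omega_eq_X_mul_nu]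
      _ = MvPowerSeries.X i ^ (p ^ n) := IwAux.pi_omega p d n i
      _ = MvPowerSeries.X i * MvPowerSeries.X i ^ (p ^ n - 1) := by
          rw [← pow_succ', Nat.sub_add_cancel h1]
  have h2 : MvPowerSeries.X i ^ 1 *
      (IwAux.piMap p d (nuElt p d n i) - MvPowerSeries.X i ^ (p ^ n - 1)) = 0 := by
    rw [pow_one, mul_sub, key, sub_self]
  have h3 := IwAux.X_pow_mul_cancel h2
  linear_combination h3

lemma IwAux.pi_eq_zero_imp {F : MvPowerSeries (Fin d) ℤ_[p]} (h : IwAux.piMap p d F = 0) :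
    ∃ G, F = MvPowerSeries.C (σ := Fin d) (R := ℤ_[p]) ((p : ℤ_[p])) * G := by
  have hdvd : ∀ e : Fin d →₀ ℕ, (p : ℤ_[p]) ∣ coeff (R := ℤ_[p]) e F := by
    intro e
    have h1 : PadicInt.toZMod (coeff (R := ℤ_[p]) e F) = 0 := by
      have := congrArg (coeff (R := ZMod p) e) h
      rwa [IwAux.piMap, MvPowerSeries.coeff_map, map_zero] at this
    have h2 : coeff (R := ℤ_[p]) e F ∈ RingHom.ker (PadicInt.toZMod : ℤ_[p] →+* ZMod p) := h1
    rw [PadicInt.ker_toZMod, PadicInt.maximalIdeal_eq_span_p, Ideal.mem_span_singleton] at h2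
    exact h2
  choose G hG using hdvd
  obtain ⟨G', hG'⟩ : ∃ G' : MvPowerSeries (Fin d) ℤ_[p], ∀ e, coeff (R := ℤ_[p]) e G' = G e :=
    ⟨fun e => G e, fun _ => rfl⟩
  refine ⟨G', ?_⟩
  ext e
  rw [MvPowerSeries.coeff_C_mul, hG']
  exact hG e

lemma IwAux.pi_surjective : Function.Surjective (IwAux.piMap p d) := by
  intro G
  obtain ⟨H, hH⟩ : ∃ H : MvPowerSeries (Fin d) ℤ_[p],
      ∀ e, coeff (R := ℤ_[p]) e H = ((coeff e G).val : ℤ_[p]) :=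
    ⟨fun e => ((coeff e G).val : ℤ_[p]), fun _ => rfl⟩
  refine ⟨H, ?_⟩
  ext e
  rw [IwAux.piMap, MvPowerSeries.coeff_map]
  rw [hH, map_natCast]
  haveI : NeZero p := ⟨(Fact.out : p.Prime).ne_zero⟩
  exact ZMod.natCast_rightInverse (coeff e G)

end PadicHelpers

section KeyLemma

variable (p : ℕ) [Fact p.Prime] (d n : ℕ)

open IwAux

/-- The key `p`-regularity lemma: `p` is a nonzerodivisor modulo the ideal
generated by `X 0` and any collection of the `f i` (which are `ω` or `ν` in
distinct variables `≠ 0`). -/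
lemma IwAux.keyL (f : Fin (d + 1) → MvPowerSeries (Fin (d + 1)) ℤ_[p])
    (hf : ∀ i : Fin (d + 1), i ≠ 0 →
      f i = omegaElt p (d + 1) n i ∨ f i = nuElt p (d + 1) n i)
    (g : Fin (d + 1) → MvPowerSeries (Fin (d + 1)) ℤ_[p])
    (hg : g = Function.update f 0 (MvPowerSeries.X 0)) :
    ∀ S : Finset (Fin (d + 1)), 0 ∉ S →
      ∀ c : MvPowerSeries (Fin (d + 1)) ℤ_[p],
        MvPowerSeries.C (σ := Fin (d + 1)) (R := ℤ_[p]) ((p : ℤ_[p])) * c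
          ∈ Ideal.span (g '' ↑(insert 0 S)) →
        c ∈ Ideal.span (g '' ↑(insert 0 S)) := by
  classical
  have hp : p.Prime := Fact.out
  -- the exponents of the reductions mod p
  set m : Fin (d + 1) → ℕ := fun i =>
    if i = 0 then 1 else if f i = omegaElt p (d + 1) n i then p ^ n else p ^ n - 1 with hm
  have hπg : ∀ i, piMap p (d + 1) (g i) = MvPowerSeries.X i ^ m i := by
    intro i
    by_cases hi : i = 0
    · subst hi
      rw [hg, Function.update_self, hm]
      simp [IwAux.piMap]
    · rw [hg, Function.update_of_ne hi]
      by_cases hΩ : f i = omegaElt p (d + 1) n i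
      · rw [hΩ, IwAux.pi_omega, hm]
        simp [hi, hΩ]
      · have hN : f i = nuElt p (d + 1) n i := (hf i hi).resolve_left hΩ
        rw [hN, IwAux.pi_nu, hm]
        simp [hi, hΩ]
  intro S
  induction S using Finset.induction_on with
  | empty =>
      intro _ c hc
      have hset : ((insert 0 (∅ : Finset (Fin (d + 1))) : Finset (Fin (d + 1))) : Set (Fin (d + 1)))
          = {0} := by simp
      rw [hset, Set.image_singleton, hg, Function.update_self] at hc ⊢
      rw [Ideal.mem_span_singleton] at hc ⊢
      rw [MvPowerSeries.X_dvd_iff] at hc ⊢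
      intro e he
      have := hc e he
      rw [MvPowerSeries.coeff_C_mul] at this
      have hpne : (p : ℤ_[p]) ≠ 0 := Nat.cast_ne_zero.mpr hp.ne_zero
      exact (mul_eq_zero.mp this).resolve_left hpne
  | @insert j S hjS IH =>
      intro h0 c hc
      have hj0 : j ≠ 0 := fun h => h0 (by simp [h])
      have h0S : 0 ∉ S := fun h => h0 (by simp [h])
      have hjT : j ∉ insert 0 S := by simp [hjS, hj0]
      have hcomm : insert 0 (insert j S) = insert j (insert 0 S) := Finset.insert_comm _ _ _
      rw [hcomm] at hc
      obtain ⟨cf, hcf⟩ := IwAux.mem_span_image_finset.mp hc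
      rw [Finset.sum_insert hjT] at hcf
      -- reduce mod p
      have hmod : MvPowerSeries.X j ^ m j * piMap p (d + 1) (cf j)
          ∈ Ideal.span ((fun i => (MvPowerSeries.X i : MvPowerSeries (Fin (d + 1)) (ZMod p)) ^ m i)
              '' ↑(insert 0 S)) := by
        refine IwAux.mem_span_image_finset.mpr ⟨fun i => -(piMap p (d + 1) (cf i)), ?_⟩
        have hπ := congrArg (piMap p (d + 1)) hcf
        rw [map_mul, map_add, map_mul, map_sum] at hπ
        have hπp : piMap p (d + 1) (MvPowerSeries.C (σ := Fin (d + 1)) (R := ℤ_[p]) ((p : ℤ_[p]))) = 0 := by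
          rw [IwAux.piMap, MvPowerSeries.map_C, map_natCast]
          have : ((p : ZMod p)) = 0 := ZMod.natCast_self p
          rw [this, map_zero]
        rw [hπp, zero_mul] at hπ
        have hπ2 : (0 : MvPowerSeries (Fin (d + 1)) (ZMod p))
            = piMap p (d + 1) (cf j) * MvPowerSeries.X j ^ m j
              + ∑ i ∈ insert 0 S, piMap p (d + 1) (cf i) * MvPowerSeries.X i ^ m i := by
          rw [hπ]
          congr 1
          · rw [hπg]
          · refine Finset.sum_congr rfl fun i _ => ?_
            rw [map_mul, hπg]
        simp only [neg_mul, Finset.sum_neg_distrib]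
        linear_combination -hπ2
      have hcfj := IwAux.mem_monomial_span_of_X_pow_mul (insert 0 S) m j hjT (m j) _ hmod
      obtain ⟨u, hu⟩ := IwAux.mem_span_image_finset.mp hcfj
      -- lift the coefficients
      choose L hL using fun i => IwAux.pi_surjective p (d + 1) (u i)
      have hw : piMap p (d + 1) (cf j - ∑ i ∈ insert 0 S, L i * g i) = 0 := by
        rw [map_sub, map_sum, hu]
        rw [Finset.sum_congr rfl fun i _ => (by rw [map_mul, hπg, hL] :
          piMap p (d + 1) (L i * g i) = u i * MvPowerSeries.X i ^ m i)]
        rw [sub_self]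
      obtain ⟨H, hH⟩ := IwAux.pi_eq_zero_imp p (d + 1) hw
      have hcfj2 : cf j = (∑ i ∈ insert 0 S, L i * g i)
          + MvPowerSeries.C (σ := Fin (d + 1)) (R := ℤ_[p]) ((p : ℤ_[p])) * H := by
        linear_combination hH
      -- the new element to which we apply the induction hypothesis
      have hnew : MvPowerSeries.C (σ := Fin (d + 1)) (R := ℤ_[p]) ((p : ℤ_[p])) * (c - g j * H)
          ∈ Ideal.span (g '' ↑(insert 0 S)) := by
        refine IwAux.mem_span_image_finset.mpr ⟨fun i => cf i + g j * L i, ?_⟩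
        have hsum : ∑ i ∈ insert 0 S, (cf i + g j * L i) * g i
            = (∑ i ∈ insert 0 S, cf i * g i) + g j * (∑ i ∈ insert 0 S, L i * g i) := by
          rw [Finset.mul_sum, ← Finset.sum_add_distrib]
          exact Finset.sum_congr rfl fun i _ => by ring
        rw [hsum]
        linear_combination hcf + g j * hcfj2
      have hc2 := IH h0S _ hnew
      -- conclude
      have hmono : Ideal.span (g '' ↑(insert 0 S))
          ≤ Ideal.span (g '' ↑(insert 0 (insert j S))) := by
        refine Ideal.span_mono (Set.image_mono ?_)
        intro x hx
        simp only [Finset.coe_insert, Set.mem_insert_iff] at hx ⊢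
        rcases hx with h | h
        · exact Or.inl h
        · exact Or.inr (Or.inr h)
      have hgj : g j ∈ Ideal.span (g '' ↑(insert 0 (insert j S))) :=
        Ideal.subset_span ⟨j, by simp, rfl⟩
      have : c = (c - g j * H) + g j * H := by ring
      rw [this]
      exact Ideal.add_mem _ (hmono hc2) (Ideal.mul_mem_right _ _ hgj)

end KeyLemma

/-- Let `Λ = ℤ_p[[T_1,…,T_d]]` with `d ≥ 1` (here `d + 1` variables indexed by
`Fin (d+1)`), `n ≥ 1`, and for each `i ≠ 0` let `f i` be either
`ω_{p^n}(T_i) = (1+T_i)^{p^n} − 1` or `ν_{p^n}(T_i) = ω_{p^n}(T_i)/T_i`.  Then the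
natural map
`Λ/(ω_{p^n}(T_1), f_2, …, f_d) → Λ/(T_1, f_2, …, f_d) ⊕ Λ/(ν_{p^n}(T_1), f_2, …, f_d)`
is injective. -/
theorem stmt_12 (p : ℕ) [Fact p.Prime] (d : ℕ) (n : ℕ) (hn : 1 ≤ n)
    (f : Fin (d + 1) → MvPowerSeries (Fin (d + 1)) ℤ_[p])
    (hf : ∀ i : Fin (d + 1), i ≠ 0 →
      f i = omegaElt p (d + 1) n i ∨ f i = nuElt p (d + 1) n i)
    (h12 : Ideal.span ({omegaElt p (d + 1) n 0} ∪ (f '' {i | i ≠ 0}))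
      ≤ Ideal.span ({MvPowerSeries.X 0} ∪ (f '' {i | i ≠ 0})))
    (h13 : Ideal.span ({omegaElt p (d + 1) n 0} ∪ (f '' {i | i ≠ 0}))
      ≤ Ideal.span ({nuElt p (d + 1) n 0} ∪ (f '' {i | i ≠ 0}))) :
    Function.Injective
      (fun a : MvPowerSeries (Fin (d + 1)) ℤ_[p] ⧸
          Ideal.span ({omegaElt p (d + 1) n 0} ∪ (f '' {i | i ≠ 0})) =>
        (Ideal.Quotient.factor h12 a, Ideal.Quotient.factor h13 a)) := by
  classical
  intro a b hab
  obtain ⟨x, rfl⟩ := Ideal.Quotient.mk_surjective a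
  obtain ⟨y, rfl⟩ := Ideal.Quotient.mk_surjective b
  simp only [Ideal.Quotient.factor_mk, Prod.mk.injEq] at hab
  obtain ⟨h1, h2⟩ := hab
  rw [Ideal.Quotient.eq] at h1 h2 ⊢
  set F : Set (MvPowerSeries (Fin (d + 1)) ℤ_[p]) := f '' {i | i ≠ 0} with hF
  set J : Ideal (MvPowerSeries (Fin (d + 1)) ℤ_[p]) := Ideal.span F with hJ
  set g := Function.update f 0 (MvPowerSeries.X (0 : Fin (d + 1))) with hg
  set Sfull : Finset (Fin (d + 1)) := Finset.univ.erase 0 with hSfull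
  have h0full : (0 : Fin (d + 1)) ∉ Sfull := by simp [hSfull]
  have himg : g '' ↑(insert 0 Sfull) = insert (MvPowerSeries.X (0 : Fin (d + 1))) F := by
    rw [Finset.coe_insert, Set.image_insert_eq, hg, Function.update_self]
    congr 1
    have hSset : (↑Sfull : Set (Fin (d + 1))) = {i | i ≠ 0} := by
      ext i; simp [hSfull]
    rw [hSset, hF]
    refine Set.image_congr fun i hi => ?_
    exact Function.update_of_ne hi _ _
  -- iterated key lemma
  have keyIter : ∀ (k : ℕ) (c : MvPowerSeries (Fin (d + 1)) ℤ_[p]),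
      (MvPowerSeries.C (σ := Fin (d + 1)) (R := ℤ_[p]) ((p : ℤ_[p]))) ^ k * c
        ∈ Ideal.span (insert (MvPowerSeries.X (0 : Fin (d + 1))) F) →
      c ∈ Ideal.span (insert (MvPowerSeries.X (0 : Fin (d + 1))) F) := by
    intro k
    induction k with
    | zero => intro c hc; simpa using hc
    | succ k IH =>
        intro c hc
        rw [pow_succ, mul_assoc] at hc
        have := IH _ hc
        rw [← himg] at this ⊢
        exact IwAux.keyL p d n f hf g hg Sfull h0full c this
  -- decompose the two memberships
  rw [Set.singleton_union, Ideal.span_insert] at h1 h2 ⊢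
  obtain ⟨u1, hu1, v1, hv1, huv1⟩ := Submodule.mem_sup.mp h1
  obtain ⟨u2, hu2, v2, hv2, huv2⟩ := Submodule.mem_sup.mp h2
  obtain ⟨bb, hbb⟩ := Ideal.mem_span_singleton.mp hu1
  obtain ⟨cc, hcc⟩ := Ideal.mem_span_singleton.mp hu2
  subst hbb hcc
  -- `ν = p^n + X 0 * w`
  set w := Polynomial.aeval (MvPowerSeries.X (0 : Fin (d + 1)) :
      MvPowerSeries (Fin (d + 1)) ℤ_[p]) ((nuPoly (p ^ n)).divX) with hw
  have hnu : nuElt p (d + 1) n 0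
      = MvPowerSeries.C (σ := Fin (d + 1)) (R := ℤ_[p]) ((p : ℤ_[p]) ^ n)
        + MvPowerSeries.X (0 : Fin (d + 1)) * w := IwAux.nu_eq p (d + 1) n 0
  have hqn : (MvPowerSeries.C (σ := Fin (d + 1)) (R := ℤ_[p]) ((p : ℤ_[p]))) ^ n
      = MvPowerSeries.C (σ := Fin (d + 1)) (R := ℤ_[p]) ((p : ℤ_[p]) ^ n) := (map_pow _ _ _).symm
  -- p^n * cc ∈ (X 0) + J
  have hpn_cc : (MvPowerSeries.C (σ := Fin (d + 1)) (R := ℤ_[p]) ((p : ℤ_[p]))) ^ n * cc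
      ∈ Ideal.span (insert (MvPowerSeries.X (0 : Fin (d + 1))) F) := by
    rw [Ideal.span_insert]
    refine Submodule.mem_sup.mpr
      ⟨MvPowerSeries.X (0 : Fin (d + 1)) * (bb - w * cc),
        Ideal.mem_span_singleton.mpr ⟨_, rfl⟩, v1 - v2, Ideal.sub_mem _ hv1 hv2, ?_⟩
    rw [hqn]
    symm
    have hx : nuElt p (d + 1) n 0 * cc = x - y - v2 := by
      rw [← huv2]; ring
    calc MvPowerSeries.C (σ := Fin (d + 1)) (R := ℤ_[p]) ((p : ℤ_[p]) ^ n) * cc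
        = nuElt p (d + 1) n 0 * cc - MvPowerSeries.X (0 : Fin (d + 1)) * (w * cc) := by
          rw [hnu]; ring
      _ = (x - y - v2) - MvPowerSeries.X (0 : Fin (d + 1)) * (w * cc) := by rw [hx]
      _ = MvPowerSeries.X (0 : Fin (d + 1)) * (bb - w * cc) + (v1 - v2) := by
          rw [← huv1]; ring
  have hcc_mem := keyIter n cc hpn_cc
  rw [Ideal.span_insert] at hcc_mem
  obtain ⟨u3, hu3, v3, hv3, huv3⟩ := Submodule.mem_sup.mp hcc_mem
  obtain ⟨ee, hee⟩ := Ideal.mem_span_singleton.mp hu3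
  subst hee
  -- conclude
  have homega : omegaElt p (d + 1) n 0
      = MvPowerSeries.X (0 : Fin (d + 1)) * nuElt p (d + 1) n 0 :=
    IwAux.omega_eq_X_mul_nu p (d + 1) n 0
  refine Submodule.mem_sup.mpr
    ⟨omegaElt p (d + 1) n 0 * ee, Ideal.mem_span_singleton.mpr ⟨_, rfl⟩,
      nuElt p (d + 1) n 0 * v3 + v2, Ideal.add_mem _ (Ideal.mul_mem_left _ _ hv3) hv2, ?_⟩
  symm
  calc x - y = nuElt p (d + 1) n 0 * cc + v2 := huv2.symm
    _ = nuElt p (d + 1) n 0 * (MvPowerSeries.X (0 : Fin (d + 1)) * ee + v3) + v2 := by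
        rw [huv3]
    _ = omegaElt p (d + 1) n 0 * ee + (nuElt p (d + 1) n 0 * v3 + v2) := by
        rw [homega]; ring
end

section
/- Let p be a prime, n ≥ 0, and ω a primitive cube root of unity. Then ∏_{ξ^{p^n}=1} (x^2 ξ^2 + x ξ + 1) = ∏_{κ=0}^{n} Φ_{3p^κ}(x) as polynomials, where the product on the left is over all p^n-th roots of unity ξ and Φ_k denotes the k-th cyclotomic polynomial; equivalently, Res(y^{p^n} − 1, Δ(x,y)) = ∏_{κ=0}^{n} Φ_{3p^κ}(x) for Δ(x,y) = x^2y^2 + xy + 1. Assume p ≠ 3. -/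
open Polynomial Finset

-- power identity on roots of unity
lemma pow_mem_nth {m k : ℕ} (hm0 : 0 < m) {x : ℂ} (hx : x ∈ nthRootsFinset m (1 : ℂ)) :
    x ^ k ∈ nthRootsFinset m (1 : ℂ) := by
  rw [mem_nthRootsFinset hm0] at *
  rw [← pow_mul, mul_comm, pow_mul, hx, one_pow]

lemma helper1 {m : ℕ} (hm0 : 0 < m) (q : ℂ[X]) :
    ∏ ξ ∈ nthRootsFinset m (1 : ℂ), (q - C ξ) = q ^ m - 1 := by
  obtain ⟨ζ, hζ⟩ : ∃ ζ : ℂ, IsPrimitiveRoot ζ m :=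
    ⟨_, Complex.isPrimitiveRoot_exp m hm0.ne'⟩
  have h := X_pow_sub_one_eq_prod hm0 hζ
  have h2 := congrArg (fun r : ℂ[X] => r.comp q) h
  simpa [Polynomial.prod_comp] using h2.symm

lemma helper2 {m : ℕ} (hm0 : 0 < m) (q : ℂ[X]) :
    ∏ ξ ∈ nthRootsFinset m (1 : ℂ), (C ξ * q - 1)
      = C (∏ ξ ∈ nthRootsFinset m (1 : ℂ), ξ) * (q ^ m - 1) := by
  have h1 : ∀ ξ ∈ nthRootsFinset m (1 : ℂ), C ξ * q - 1 = C ξ * (q - C ξ⁻¹) := by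
    intro ξ hξ
    have h0 : ξ ≠ 0 := ne_zero_of_mem_nthRootsFinset one_ne_zero hξ
    rw [mul_sub, ← C_mul, mul_inv_cancel₀ h0, C_1]
  rw [Finset.prod_congr rfl h1, Finset.prod_mul_distrib, ← map_prod]
  congr 1
  rw [← helper1 hm0 q]
  refine Finset.prod_nbij' (fun ξ => ξ⁻¹) (fun ξ => ξ⁻¹) ?_ ?_ ?_ ?_ ?_ <;>
    intro ξ hξ <;> simp_all [mem_nthRootsFinset hm0, inv_pow, inv_inv]

lemma divisors_eq (p : ℕ) (hp : p.Prime) (hp3 : p ≠ 3) (n : ℕ) :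
    (3 * p ^ n).divisors \ (p ^ n).divisors
      = (Finset.range (n + 1)).image (fun κ => 3 * p ^ κ) := by
  have hpn : p ^ n ≠ 0 := (pow_pos hp.pos n).ne'
  have h3p : ¬ (3 ∣ p ^ n) := by
    intro h
    have := (Nat.prime_dvd_prime_iff_eq Nat.prime_three hp).mp
      (Nat.Prime.dvd_of_dvd_pow Nat.prime_three h)
    exact hp3 this.symm
  ext d
  simp only [Finset.mem_sdiff, Nat.mem_divisors, Finset.mem_image, Finset.mem_range]
  constructor
  · rintro ⟨⟨hd, -⟩, hnd⟩
    obtain ⟨a, b, ha, hb, rfl⟩ := exists_dvd_and_dvd_of_dvd_mul hd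
    rcases (Nat.Prime.eq_one_or_self_of_dvd Nat.prime_three a ha) with rfl | rfl
    · exact absurd ⟨by simpa using hb, hpn⟩ hnd
    · obtain ⟨κ, hκ, rfl⟩ := (Nat.dvd_prime_pow hp).mp hb
      exact ⟨κ, Nat.lt_succ_of_le hκ, rfl⟩
  · rintro ⟨κ, hκ, rfl⟩
    refine ⟨⟨Nat.mul_dvd_mul_left 3 (pow_dvd_pow p (Nat.lt_succ_iff.mp hκ)), by positivity⟩, ?_⟩
    rintro ⟨hd, -⟩
    exact h3p (dvd_trans (Dvd.intro _ rfl) hd)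

/-- Let `p ≠ 3` be a prime and `n ≥ 0`.  Then
`∏_{ξ^{p^n} = 1} (x² ξ² + x ξ + 1) = ∏_{κ=0}^{n} Φ_{3p^κ}(x)` as polynomials
(over `ℂ`), where the left product is over all `p^n`-th roots of unity `ξ` and
`Φ_k` denotes the `k`-th cyclotomic polynomial.  Equivalently,
`Res(y^{p^n} − 1, Δ(x,y)) = ∏_{κ=0}^{n} Φ_{3p^κ}(x)` for
`Δ(x,y) = x²y² + xy + 1`. -/
theorem stmt_15 (p : ℕ) (hp : p.Prime) (hp3 : p ≠ 3) (n : ℕ) :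
    ∏ ξ ∈ (Polynomial.nthRoots (p ^ n) (1 : ℂ)).toFinset,
        (Polynomial.C (ξ ^ 2) * Polynomial.X ^ 2 + Polynomial.C ξ * Polynomial.X + 1)
      = ∏ κ ∈ Finset.range (n + 1), Polynomial.cyclotomic (3 * p ^ κ) ℂ := by
  have hm0 : 0 < p ^ n := pow_pos hp.pos n
  have hS : (nthRoots (p ^ n) (1 : ℂ)).toFinset = nthRootsFinset (p ^ n) (1 : ℂ) := by
    ext x
    simp [Polynomial.nthRootsFinset_def]
  rw [hS]
  set S := nthRootsFinset (p ^ n) (1 : ℂ) with hSdef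
  set c : ℂ := ∏ ξ ∈ S, ξ with hcdef
  have hc : c ≠ 0 := Finset.prod_ne_zero_iff.mpr fun ξ hξ => ne_zero_of_mem_nthRootsFinset one_ne_zero hξ
  -- coprimality of 3 and p ^ n
  have hcop : Nat.Coprime 3 (p ^ n) :=
    Nat.Coprime.pow_right n ((Nat.coprime_primes Nat.prime_three hp).mpr (Ne.symm hp3))
  -- inverse exponent a with 3 * a = 1 + p ^ n * k
  set a : ℕ := 3 ^ (Nat.totient (p ^ n) - 1) with hadef
  obtain ⟨k, hk⟩ : ∃ k, 3 * a = 1 + p ^ n * k := by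
    have ht : 0 < Nat.totient (p ^ n) := Nat.totient_pos.mpr hm0
    have h1 : (3 : ℕ) ^ Nat.totient (p ^ n) ≡ 1 [MOD p ^ n] := Nat.ModEq.pow_totient hcop
    have h2 : 3 * a = 3 ^ Nat.totient (p ^ n) := by
      rw [hadef, ← pow_succ', Nat.sub_add_cancel ht]
    have ha0 : 0 < a := pow_pos (by norm_num) _
    have h3 : (1 : ℕ) ≤ 3 * a := by omega
    obtain ⟨k, hk⟩ := (Nat.modEq_iff_dvd' h3).mp ((h2 ▸ h1).symm)
    exact ⟨k, by omega⟩
  have h3a : ∀ x ∈ S, x ^ (3 * a) = x := by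
    intro x hx
    have hx1 : x ^ (p ^ n) = 1 := (mem_nthRootsFinset hm0 (1 : ℂ)).mp hx
    rw [hk, pow_add, pow_one, pow_mul, hx1, one_pow, mul_one]
  -- main product identity
  have key : (∏ ξ ∈ S, (C (ξ ^ 2) * X ^ 2 + C ξ * X + 1)) * (C c * (X ^ (p ^ n) - 1))
      = C c * ((X ^ 3) ^ (p ^ n) - 1) := by
    rw [← helper2 hm0 X, ← Finset.prod_mul_distrib, ← helper2 hm0 (X ^ 3)]
    have hstep : ∀ ξ ∈ S, (C (ξ ^ 2) * X ^ 2 + C ξ * X + 1) * (C ξ * X - 1)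
        = C (ξ ^ 3) * X ^ 3 - 1 := by
      intro ξ _
      simp only [map_pow]
      ring
    rw [Finset.prod_congr rfl hstep]
    refine Finset.prod_nbij' (fun ξ => ξ ^ 3) (fun ξ => ξ ^ a) ?_ ?_ ?_ ?_ ?_
    · exact fun x hx => pow_mem_nth hm0 hx
    · exact fun x hx => pow_mem_nth hm0 hx
    · intro x hx
      show (x ^ 3) ^ a = x
      rw [← pow_mul]
      exact h3a x hx
    · intro x hx
      show (x ^ a) ^ 3 = x
      rw [← pow_mul, mul_comm a 3]
      exact h3a x hx
    · exact fun x _ => rfl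
  -- right-hand side identity
  have hmem : p ^ n ∈ (3 * p ^ n).properDivisors := by
    rw [Nat.mem_properDivisors]
    exact ⟨dvd_mul_left (p ^ n) 3, by omega⟩
  have hinj : ∀ x ∈ Finset.range (n + 1), ∀ y ∈ Finset.range (n + 1),
      3 * p ^ x = 3 * p ^ y → x = y := by
    intro x _ y _ hxy
    exact Nat.pow_right_injective hp.two_le (Nat.eq_of_mul_eq_mul_left (by norm_num) hxy)
  have hrhs : (X ^ (p ^ n) - 1) * ∏ κ ∈ Finset.range (n + 1), cyclotomic (3 * p ^ κ) ℂ
      = (X ^ 3) ^ (p ^ n) - 1 := by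
    have h := X_pow_sub_one_mul_prod_cyclotomic_eq_X_pow_sub_one_of_dvd ℂ (Nat.mem_properDivisors.mp hmem).1 (by omega)
    rw [divisors_eq p hp hp3 n, Finset.prod_image hinj] at h
    rw [← pow_mul]
    exact h
  -- put it together
  have hXm : (X : ℂ[X]) ^ (p ^ n) - 1 ≠ 0 := by
    simpa using X_pow_sub_C_ne_zero hm0 (1 : ℂ)
  have hcc : C c * (X ^ (p ^ n) - 1) ≠ (0 : ℂ[X]) :=
    mul_ne_zero (by simpa using hc) hXm
  apply mul_right_cancel₀ hcc
  rw [key, ← hrhs]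
  ring
end

section
/- Let p ≠ 3 be a prime. Then ∏_{ζ_1, ζ_2} Δ(ζ_1, ζ_2) = ±3^{p^n − 1}, where Δ(x,y) = x^2 y^2 + xy + 1 and the product runs over all pairs (ζ_1, ζ_2) of p^n-th roots of unity with ζ_1 ≠ 1 and ζ_2 ≠ 1. In particular its absolute value is 3^{p^n − 1}. -/
open Polynomial Finset Complex

namespace Stmt16Aux

/-- The product of `ζ - a` over all `N`-th roots of unity `ζ` is `(-1)^N * (a^N - 1)`. -/
lemma prod_sub (N : ℕ) (hN : 0 < N) (a : ℂ) :
    ∏ ζ ∈ nthRootsFinset N (1 : ℂ), (ζ - a) = (-1) ^ N * (a ^ N - 1) := by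
  have hprim := Complex.isPrimitiveRoot_exp N hN.ne'
  have h := congrArg (Polynomial.eval a) (X_pow_sub_one_eq_prod hN hprim)
  simp only [eval_sub, eval_pow, eval_X, eval_one, eval_prod, eval_sub, eval_C] at h
  calc ∏ ζ ∈ nthRootsFinset N (1 : ℂ), (ζ - a)
      = ∏ ζ ∈ nthRootsFinset N (1 : ℂ), (-1) * (a - ζ) := by
        apply Finset.prod_congr rfl; intro ζ _; ring
    _ = (-1) ^ (nthRootsFinset N (1 : ℂ)).card * ∏ ζ ∈ nthRootsFinset N (1 : ℂ), (a - ζ) := by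
        rw [Finset.prod_mul_distrib, Finset.prod_const]
    _ = (-1) ^ N * (a ^ N - 1) := by rw [hprim.card_nthRootsFinset, ← h]

/-- The product of `Φ₃(ζ) = ζ² + ζ + 1` over all `N`-th roots of unity is `3`,
provided `3 ∤ N`. -/
lemma prod_phi3 (N : ℕ) (hN : 0 < N) (hN3 : ¬ (3 ∣ N)) :
    ∏ ζ ∈ nthRootsFinset N (1 : ℂ), (ζ ^ 2 + ζ + 1) = 3 := by
  obtain ⟨α, hα⟩ : ∃ α : ℂ, IsPrimitiveRoot α 3 :=
    ⟨_, Complex.isPrimitiveRoot_exp 3 (by norm_num)⟩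
  have hα3 : α ^ 3 = 1 := hα.pow_eq_one
  have hαne : α ≠ 1 := hα.ne_one (by norm_num)
  have hαsum : α ^ 2 + α + 1 = 0 := by
    have h : (α - 1) * (α ^ 2 + α + 1) = 0 := by linear_combination hα3
    rcases mul_eq_zero.mp h with h1 | h2
    · exact absurd (sub_eq_zero.mp h1) hαne
    · exact h2
  have hfac : ∀ ζ : ℂ, ζ ^ 2 + ζ + 1 = (ζ - α) * (ζ - α ^ 2) := by
    intro ζ
    linear_combination ζ * hαsum - hα3
  have hE : ((-1 : ℂ)) ^ (N + N) = 1 := Even.neg_one_pow ⟨N, rfl⟩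
  calc ∏ ζ ∈ nthRootsFinset N (1 : ℂ), (ζ ^ 2 + ζ + 1)
      = ∏ ζ ∈ nthRootsFinset N (1 : ℂ), ((ζ - α) * (ζ - α ^ 2)) := by
        exact Finset.prod_congr rfl fun ζ _ => hfac ζ
    _ = ((-1) ^ N * (α ^ N - 1)) * ((-1) ^ N * ((α ^ 2) ^ N - 1)) := by
        rw [Finset.prod_mul_distrib, prod_sub N hN α, prod_sub N hN (α ^ 2)]
    _ = (-1 : ℂ) ^ (N + N) * ((α ^ N - 1) * ((α ^ N) ^ 2 - 1)) := by
        rw [pow_add]; ring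
    _ = (α ^ N - 1) * ((α ^ N) ^ 2 - 1) := by rw [hE, one_mul]
    _ = 3 := by
        have hγ3 : (α ^ N) ^ 3 = 1 := by
          rw [← pow_mul, mul_comm, pow_mul, hα3, one_pow]
        have hγne : α ^ N ≠ 1 := fun h => hN3 (hα.dvd_of_pow_eq_one N h)
        have hγsum : (α ^ N) ^ 2 + α ^ N + 1 = 0 := by
          have h : (α ^ N - 1) * ((α ^ N) ^ 2 + α ^ N + 1) = 0 := by
            linear_combination hγ3
          rcases mul_eq_zero.mp h with h1 | h2
          · exact absurd (sub_eq_zero.mp h1) hγne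
          · exact h2
        linear_combination hγ3 - hγsum

/-- Translating the product over roots of unity by a fixed root of unity. -/
lemma prod_translate (N : ℕ) (hN : 0 < N) {c : ℂ} (hc : c ∈ nthRootsFinset N (1 : ℂ))
    (f : ℂ → ℂ) :
    ∏ ζ ∈ nthRootsFinset N (1 : ℂ), f (c * ζ) = ∏ ζ ∈ nthRootsFinset N (1 : ℂ), f ζ := by
  have hcN : c ^ N = 1 := (mem_nthRootsFinset hN (1 : ℂ)).mp hc
  have hc0 : c ≠ 0 := by
    intro h; rw [h, zero_pow hN.ne'] at hcN; exact zero_ne_one hcN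
  refine Finset.prod_nbij' (fun ζ => c * ζ) (fun ζ => c⁻¹ * ζ) ?_ ?_ ?_ ?_ ?_
  · intro ζ hζ
    rw [mem_nthRootsFinset hN] at hζ ⊢
    rw [mul_pow, hcN, hζ, mul_one]
  · intro ζ hζ
    rw [mem_nthRootsFinset hN] at hζ ⊢
    rw [mul_pow, inv_pow, hcN, hζ, inv_one, mul_one]
  · intro ζ _; field_simp
  · intro ζ _; field_simp
  · intro ζ _; rfl

end Stmt16Aux

/-- Let `p ≠ 3` be a prime.  Then `∏ Δ(ζ₁, ζ₂) = ±3^(p^n − 1)` with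
`Δ(x,y) = x²y² + xy + 1`, the product running over all pairs `(ζ₁, ζ₂)` of
`p^n`-th roots of unity with `ζ₁ ≠ 1` and `ζ₂ ≠ 1`; in particular its absolute
value is `3^(p^n − 1)`. -/
theorem stmt_16 (p : ℕ) (hp : p.Prime) (hp3 : p ≠ 3) (n : ℕ) :
    ‖(∏ ζ₁ ∈ (Polynomial.nthRoots (p ^ n) (1 : ℂ)).toFinset.erase 1,
        ∏ ζ₂ ∈ (Polynomial.nthRoots (p ^ n) (1 : ℂ)).toFinset.erase 1,
          (ζ₁ ^ 2 * ζ₂ ^ 2 + ζ₁ * ζ₂ + 1))‖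
      = (3 : ℝ) ^ (p ^ n - 1) := by
  open Stmt16Aux in
  set N := p ^ n with hNdef
  have hN : 0 < N := pow_pos hp.pos n
  have hN3 : ¬ (3 ∣ N) := by
    intro h
    have h3 : (3 : ℕ).Prime := by norm_num
    have := h3.dvd_of_dvd_pow h
    exact hp3 ((Nat.prime_dvd_prime_iff_eq h3 hp).mp this).symm
  have hSet : (Polynomial.nthRoots N (1 : ℂ)).toFinset = nthRootsFinset N (1 : ℂ) :=
    (Polynomial.nthRootsFinset_def N (1 : ℂ)).symm
  rw [hSet]
  have h1mem : (1 : ℂ) ∈ nthRootsFinset N (1 : ℂ) := (mem_nthRootsFinset hN (1 : ℂ)).mpr (one_pow N)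
  -- Φ₃ is nonzero on N-th roots of unity
  have hphine : ∀ ζ ∈ nthRootsFinset N (1 : ℂ), ζ ^ 2 + ζ + 1 ≠ 0 := by
    intro ζ hζ h0
    have hζN : ζ ^ N = 1 := (mem_nthRootsFinset hN (1 : ℂ)).mp hζ
    have hζ3 : ζ ^ 3 = 1 := by linear_combination (ζ - 1) * h0
    have hg : ζ ^ Nat.gcd 3 N = 1 := pow_gcd_eq_one.mpr ⟨hζ3, hζN⟩
    have hgcd : Nat.gcd 3 N = 1 := (Nat.coprime_primes (by norm_num) hp).mpr
      (fun h => hp3 h.symm) |>.pow_right n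
    rw [hgcd, pow_one] at hg
    rw [hg] at h0
    norm_num at h0
  -- the product of Φ₃ over the erased set is 1
  have hprod_erase : ∏ ζ ∈ (nthRootsFinset N (1 : ℂ)).erase 1, (ζ ^ 2 + ζ + 1) = 1 := by
    have h := Finset.mul_prod_erase (nthRootsFinset N (1 : ℂ)) (fun ζ => ζ ^ 2 + ζ + 1) h1mem
    rw [prod_phi3 N hN hN3] at h
    simp only [one_pow, mul_one] at h
    norm_num at h
    exact h
  -- inner products
  have hinner : ∀ ζ₁ ∈ (nthRootsFinset N (1 : ℂ)).erase 1,
      ∏ ζ₂ ∈ (nthRootsFinset N (1 : ℂ)).erase 1, (ζ₁ ^ 2 * ζ₂ ^ 2 + ζ₁ * ζ₂ + 1)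
        = 3 * (ζ₁ ^ 2 + ζ₁ + 1)⁻¹ := by
    intro ζ₁ hζ₁
    have hζ₁S : ζ₁ ∈ nthRootsFinset N (1 : ℂ) := Finset.mem_of_mem_erase hζ₁
    have hfull : ∏ ζ₂ ∈ nthRootsFinset N (1 : ℂ), ((ζ₁ * ζ₂) ^ 2 + ζ₁ * ζ₂ + 1) = 3 := by
      rw [prod_translate N hN hζ₁S (fun z => z ^ 2 + z + 1), prod_phi3 N hN hN3]
    have h := Finset.mul_prod_erase (nthRootsFinset N (1 : ℂ))
      (fun ζ₂ => (ζ₁ * ζ₂) ^ 2 + ζ₁ * ζ₂ + 1) h1mem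
    rw [hfull] at h
    simp only [mul_one] at h
    have hne := hphine ζ₁ hζ₁S
    have hrw : ∀ ζ₂ : ℂ, (ζ₁ * ζ₂) ^ 2 + ζ₁ * ζ₂ + 1 = ζ₁ ^ 2 * ζ₂ ^ 2 + ζ₁ * ζ₂ + 1 := by
      intro ζ₂; ring
    simp only [hrw] at h
    rw [eq_mul_inv_iff_mul_eq₀ hne]
    linear_combination h
  rw [Finset.prod_congr rfl hinner, Finset.prod_mul_distrib, Finset.prod_const,
    Finset.prod_inv_distrib, hprod_erase]
  have hcard : ((nthRootsFinset N (1 : ℂ)).erase 1).card = N - 1 := by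
    rw [Finset.card_erase_of_mem h1mem,
      (Complex.isPrimitiveRoot_exp N hN.ne').card_nthRootsFinset]
  rw [hcard, inv_one, mul_one, norm_pow]
  norm_num
end
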